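/- Let β > 0, β ≠ 1, t_min > 0, D > t_min, 0 ≤ τ_est ≤ τ_kill, 0 ≤ φ < 1, and let r ≥ 0 be an integer with β·(r+1) > 1. Let T, X_1, ..., X_{r+1} be mutually independent Pareto(t_min, β) random variables. Define the random variable M = T on the event {T ≤ D}, and M = τ_est + r·(τ_kill − τ_est) + max(t_min, (1 − φ)·min(X_1, ..., X_{r+1})) on the event {T > D}. Then E[M] = E1·(1 − (t_min/D)^β) + (t_min/D)^β·( τ_est + r·(τ_kill − τ_est) + t_min·(1 − φ)^{β·(r+1)}/(β·(r+1) − 1) + t_min ), where E1 = t_min·D·β·(t_min^{β−1} − D^{β−1})/((1 − β)·(D^β − t_min^β)). -/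

import Mathlib

open MeasureTheory ProbabilityTheory Set

/-- A real random variable `X` is Pareto(`tmin`, `β`): `P(X > t) = (tmin/t)^β` for `t ≥ tmin`
and `P(X > t) = 1` for `t < tmin`. -/
def IsPareto {Ω : Type*} [MeasurableSpace Ω] (μ : Measure Ω) (X : Ω → ℝ)
    (tmin β : ℝ) : Prop :=
  Measurable X ∧
    (∀ t : ℝ, tmin ≤ t → μ {ω | t < X ω} = ENNReal.ofReal ((tmin / t) ^ β)) ∧
    (∀ t : ℝ, t < tmin → μ {ω | t < X ω} = 1)

namespace SpecRes

lemma lt_iInf_iff' {ι : Type*} [Fintype ι] [Nonempty ι] (g : ι → ℝ) (t : ℝ) :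
    t < (⨅ i, g i) ↔ ∀ i, t < g i := by
  rw [← Finset.inf'_univ_eq_ciInf]
  simp [Finset.lt_inf'_iff]

lemma iInf_lt_iff' {ι : Type*} [Fintype ι] [Nonempty ι] (g : ι → ℝ) (t : ℝ) :
    (⨅ i, g i) < t ↔ ∃ i, g i < t := by
  rw [← Finset.inf'_univ_eq_ciInf]
  simp [Finset.inf'_lt_iff]

lemma measurable_iInf_real {Ω : Type*} [MeasurableSpace Ω] {ι : Type*} [Fintype ι] [Nonempty ι]
    (f : ι → Ω → ℝ) (hf : ∀ i, Measurable (f i)) : Measurable fun ω => ⨅ i, f i ω := by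
  apply measurable_of_Iio
  intro a
  have h : (fun ω => ⨅ i, f i ω) ⁻¹' Iio a = ⋃ i, (f i) ⁻¹' Iio a := by
    ext ω
    simp only [mem_preimage, mem_Iio, mem_iUnion, iInf_lt_iff']
  rw [h]
  exact MeasurableSet.iUnion fun i => (hf i) measurableSet_Iio

/-- Layer-cake helper. -/
lemma integral_of_survival {Ω : Type*} [MeasurableSpace Ω] (μ : Measure Ω)
    [IsProbabilityMeasure μ]
    (W : Ω → ℝ) (hW : Measurable W) (hnn : 0 ≤ᵐ[μ] W)
    (S : ℝ → ℝ) (hS : ∀ t, 0 < t → μ {ω | t < W ω} = ENNReal.ofReal (S t))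
    (hSnn : ∀ t ∈ Ioi (0:ℝ), 0 ≤ S t)
    (hSint : IntegrableOn S (Ioi 0)) :
    Integrable W μ ∧ ∫ ω, W ω ∂μ = ∫ t in Ioi (0:ℝ), S t := by
  have hSnn' : 0 ≤ᵐ[volume.restrict (Ioi (0:ℝ))] S :=
    (ae_restrict_iff' measurableSet_Ioi).2 (ae_of_all _ hSnn)
  have key : ∫⁻ ω, ENNReal.ofReal (W ω) ∂μ = ENNReal.ofReal (∫ t in Ioi (0:ℝ), S t) := by
    rw [lintegral_eq_lintegral_meas_lt μ hnn hW.aemeasurable,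
      ofReal_integral_eq_lintegral_ofReal hSint hSnn']
    exact setLIntegral_congr_fun measurableSet_Ioi (fun t ht => hS t ht)
  have hint : Integrable W μ := by
    refine ⟨hW.aestronglyMeasurable, ?_⟩
    rw [hasFiniteIntegral_iff_ofReal hnn, key]
    exact ENNReal.ofReal_lt_top
  refine ⟨hint, ?_⟩
  rw [integral_eq_lintegral_of_nonneg_ae hnn hW.aestronglyMeasurable, key,
    ENNReal.toReal_ofReal (setIntegral_nonneg measurableSet_Ioi hSnn)]


/-- Expectation of a random variable with Pareto-like tail:
`P(W > t) = 1` for `t < m` and `P(W > t) = (c/t)^b` for `t ≥ m`. -/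
lemma expectation_pareto_like {Ω : Type*} [MeasurableSpace Ω] (μ : Measure Ω)
    [IsProbabilityMeasure μ]
    (W : Ω → ℝ) (hW : Measurable W) (hnn : 0 ≤ᵐ[μ] W)
    (m c b : ℝ) (hm : 0 < m) (hc : 0 < c) (hb : 1 < b)
    (h1 : ∀ t : ℝ, t < m → μ {ω | t < W ω} = 1)
    (h2 : ∀ t : ℝ, m ≤ t → μ {ω | t < W ω} = ENNReal.ofReal ((c / t) ^ b)) :
    Integrable W μ ∧ ∫ ω, W ω ∂μ = m + c ^ b * m ^ (1 - b) / (b - 1) := by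
  set S : ℝ → ℝ := fun t => if t < m then 1 else c ^ b * t ^ (-b) with hSdef
  have hSval : ∀ t : ℝ, m ≤ t → S t = (c / t) ^ b := by
    intro t ht
    have ht0 : 0 < t := lt_of_lt_of_le hm ht
    simp only [hSdef, not_lt.2 ht, if_neg (not_lt.2 ht)]
    rw [Real.div_rpow hc.le ht0.le, Real.rpow_neg ht0.le, div_eq_mul_inv]
  have hS : ∀ t : ℝ, 0 < t → μ {ω | t < W ω} = ENNReal.ofReal (S t) := by
    intro t ht
    rcases lt_or_ge t m with h | h
    · rw [h1 t h, hSdef]; simp [h]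
    · rw [h2 t h, hSval t h]
  have hSnn : ∀ t ∈ Ioi (0:ℝ), 0 ≤ S t := by
    intro t ht
    rcases lt_or_ge t m with h | h
    · simp [hSdef, h]
    · rw [hSval t h]
      have ht0 : (0:ℝ) < t := ht
      positivity
  have hsplit : Ioo (0:ℝ) m ∪ Ici m = Ioi 0 := Ioo_union_Ici_eq_Ioi hm
  have hint1 : IntegrableOn S (Ioo 0 m) := by
    refine IntegrableOn.congr_fun (f := fun _ => (1:ℝ))
      (integrableOn_const measure_Ioo_lt_top.ne) ?_ measurableSet_Ioo
    intro t ht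
    simp [hSdef, ht.2]
  have hint2 : IntegrableOn S (Ici m) := by
    rw [integrableOn_Ici_iff_integrableOn_Ioi]
    refine IntegrableOn.congr_fun (f := fun t => c ^ b * t ^ (-b))
      ((integrableOn_Ioi_rpow_of_lt (by linarith : -b < -1) hm).const_mul (c ^ b))
      ?_ measurableSet_Ioi
    intro t ht
    simp [hSdef, not_lt.2 (le_of_lt (mem_Ioi.1 ht))]
  have hSint : IntegrableOn S (Ioi 0) := by
    rw [← hsplit]
    exact hint1.union hint2
  obtain ⟨hint, hval⟩ := integral_of_survival μ W hW hnn S hS hSnn hSint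
  refine ⟨hint, ?_⟩
  rw [hval, ← hsplit, setIntegral_union (Disjoint.mono_left Ioo_subset_Iio_self (Iio_disjoint_Ici le_rfl)) measurableSet_Ici hint1 hint2]
  have e1 : ∫ t in Ioo (0:ℝ) m, S t = m := by
    rw [setIntegral_congr_fun measurableSet_Ioo (fun t ht => by simp [hSdef, ht.2] : EqOn S 1 _)]
    simp [Real.volume_Ioo, hm.le]
  have e2 : ∫ t in Ici m, S t = c ^ b * m ^ (1 - b) / (b - 1) := by
    rw [setIntegral_congr_fun measurableSet_Ici
      (fun t ht => by simp [hSdef, not_lt.2 (mem_Ici.1 ht)] : EqOn S (fun t => c ^ b * t ^ (-b)) _)]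
    rw [MeasureTheory.integral_Ici_eq_integral_Ioi, integral_const_mul _ _,
      integral_Ioi_rpow_of_lt (by linarith : -b < -1) hm]
    rw [show -b + 1 = 1 - b by ring, show (1:ℝ) - b = -(b - 1) by ring,
      div_neg, neg_div, neg_neg, mul_div_assoc]
  rw [e1, e2]


/-- Expectation of a Pareto variable truncated at `D` (zero above `D`). -/
lemma expectation_pareto_trunc {Ω : Type*} [MeasurableSpace Ω] (μ : Measure Ω)
    [IsProbabilityMeasure μ]
    (W : Ω → ℝ) (m b D : ℝ) (hm : 0 < m) (hb : 0 < b) (hmD : m < D)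
    (hW : Measurable W)
    (hsur : ∀ t : ℝ, m ≤ t → μ {ω | t < W ω} = ENNReal.ofReal ((m / t) ^ b))
    (h1 : ∀ t : ℝ, t < m → μ {ω | t < W ω} = 1)
    (hb1 : b ≠ 1) :
    Integrable (fun ω => if W ω ≤ D then W ω else 0) μ ∧
      ∫ ω, (if W ω ≤ D then W ω else 0) ∂μ
        = (1 - (m / D) ^ b) * m
          + (m ^ b * (D ^ (1 - b) - m ^ (1 - b)) / (1 - b) - (m / D) ^ b * (D - m)) := by
  have hD0 : (0:ℝ) < D := hm.trans hmD
  set q : ℝ := (m / D) ^ b with hqdef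
  have hq0 : 0 ≤ q := Real.rpow_nonneg (div_nonneg hm.le hD0.le) b
  have hq1 : q ≤ 1 :=
    Real.rpow_le_one (div_nonneg hm.le hD0.le) ((div_le_one hD0).2 hmD.le) hb.le
  have hDW : μ {ω | D < W ω} = ENNReal.ofReal q := hsur D hmD.le
  set f : Ω → ℝ := fun ω => if W ω ≤ D then W ω else 0 with hfdef
  have hfm : Measurable f := Measurable.ite (measurableSet_le hW measurable_const) hW
    measurable_const
  -- a.e. nonnegativity
  have hWnn : 0 ≤ᵐ[μ] W := by
    have h0 : μ {ω | (0:ℝ) < W ω} = 1 := h1 0 hm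
    have hms : MeasurableSet {ω | (0:ℝ) < W ω} := measurableSet_lt measurable_const hW
    have hcompl : μ ({ω | (0:ℝ) < W ω}ᶜ) = 0 := by
      rw [measure_compl hms (measure_ne_top μ _), h0, measure_univ, tsub_self]
    have hae : ∀ᵐ ω ∂μ, 0 < W ω := by
      rw [ae_iff]
      exact hcompl
    exact hae.mono fun ω h => h.le
  have hfnn : 0 ≤ᵐ[μ] f := by
    filter_upwards [hWnn] with ω hω
    simp only [Pi.zero_apply] at hω ⊢
    by_cases h : W ω ≤ D <;> simp [hfdef, h, hω]
  -- survival set of f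
  have hfset : ∀ t : ℝ, 0 < t → {ω | t < f ω} = {ω | t < W ω} \ {ω | D < W ω} := by
    intro t ht
    ext ω
    by_cases h : W ω ≤ D
    · simp [hfdef, h, not_lt.2 h]
    · have hD' : D < W ω := not_le.1 h
      simp only [hfdef, mem_setOf_eq, mem_diff, if_neg h]
      constructor
      · intro h'; exact absurd h' ht.not_gt
      · rintro ⟨-, h2⟩; exact absurd hD' h2
  -- survival function
  set Sf : ℝ → ℝ := fun t => if t < m then 1 - q else if t < D then (m / t) ^ b - q else 0
    with hSdef
  have hS : ∀ t : ℝ, 0 < t → μ {ω | t < f ω} = ENNReal.ofReal (Sf t) := by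
    intro t ht
    rcases lt_or_ge t D with htD | htD
    · have hsub : {ω | D < W ω} ⊆ {ω | t < W ω} := fun ω hω => htD.trans hω
      have hmeas : μ {ω | t < f ω} = μ {ω | t < W ω} - μ {ω | D < W ω} := by
        rw [hfset t ht]
        exact measure_diff hsub ((hW measurableSet_Ioi).nullMeasurableSet) (measure_ne_top μ _)
      rcases lt_or_ge t m with htm | htm
      · rw [hmeas, h1 t htm, hDW, hSdef]
        simp only [if_pos htm]
        rw [← ENNReal.ofReal_one, ← ENNReal.ofReal_sub _ hq0]
      · rw [hmeas, hsur t htm, hDW, hSdef]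
        simp only [if_neg (not_lt.2 htm), if_pos htD]
        rw [← ENNReal.ofReal_sub _ hq0]
    · have : {ω | t < f ω} = ∅ := by
        rw [hfset t ht]
        ext ω
        simp only [mem_diff, mem_setOf_eq, mem_empty_iff_false, iff_false, not_and, not_not]
        intro hω
        exact htD.trans_lt hω
      rw [this, hSdef]
      have h1' : ¬ t < m := not_lt.2 (hmD.le.trans htD)
      have h2' : ¬ t < D := not_lt.2 htD
      simp [h1', h2']
  -- nonnegativity of Sf
  have hqle : ∀ t : ℝ, m ≤ t → t ≤ D → q ≤ (m / t) ^ b := by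
    intro t htm htD
    have ht0 : 0 < t := hm.trans_le htm
    exact Real.rpow_le_rpow (div_nonneg hm.le hD0.le)
      (div_le_div_of_nonneg_left hm.le ht0 htD) hb.le
  have hSnn : ∀ t ∈ Ioi (0:ℝ), 0 ≤ Sf t := by
    intro t ht
    rcases lt_or_ge t m with htm | htm
    · simp only [hSdef, if_pos htm]; linarith
    · rcases lt_or_ge t D with htD | htD
      · simp only [hSdef, if_neg (not_lt.2 htm), if_pos htD]
        linarith [hqle t htm htD.le]
      · simp [hSdef, not_lt.2 htm, not_lt.2 htD, not_lt.2 (hmD.le.trans htD)]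
  -- integrability
  have hsplit1 : Ico m D ∪ Ici D = Ici m := Ico_union_Ici_eq_Ici hmD.le
  have hsplit2 : Ioo (0:ℝ) m ∪ Ici m = Ioi 0 := Ioo_union_Ici_eq_Ioi hm
  have hcont : ContinuousOn (fun t : ℝ => (m / t) ^ b - q) (Icc m D) := by
    refine ContinuousOn.sub ?_ continuousOn_const
    refine ContinuousOn.rpow_const ?_ (fun x hx => Or.inr hb.le)
    exact continuousOn_const.div continuousOn_id
      (fun x hx => ne_of_gt (lt_of_lt_of_le hm hx.1))
  have hint1 : IntegrableOn Sf (Ioo 0 m) := by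
    refine IntegrableOn.congr_fun (f := fun _ => (1 - q : ℝ))
      (integrableOn_const measure_Ioo_lt_top.ne) ?_ measurableSet_Ioo
    intro t ht
    simp [hSdef, ht.2]
  have hint2 : IntegrableOn Sf (Ico m D) := by
    refine IntegrableOn.congr_fun (f := fun t : ℝ => (m / t) ^ b - q)
      ((hcont.integrableOn_Icc).mono_set Ico_subset_Icc_self) ?_ measurableSet_Ico
    intro t ht
    simp [hSdef, not_lt.2 ht.1, ht.2]
  have hint3 : IntegrableOn Sf (Ici D) := by
    refine IntegrableOn.congr_fun (f := fun _ : ℝ => (0:ℝ))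
      (integrableOn_zero) ?_ measurableSet_Ici
    intro t ht
    simp [hSdef, not_lt.2 (mem_Ici.1 ht), not_lt.2 (hmD.le.trans (mem_Ici.1 ht))]
  have hint23 : IntegrableOn Sf (Ici m) := by
    rw [← hsplit1]; exact hint2.union hint3
  have hSint : IntegrableOn Sf (Ioi 0) := by
    rw [← hsplit2]; exact hint1.union hint23
  obtain ⟨hint, hval⟩ := integral_of_survival μ f hfm hfnn Sf hS hSnn hSint
  refine ⟨hint, ?_⟩
  rw [hval, ← hsplit2,
    setIntegral_union (Disjoint.mono_left Ioo_subset_Iio_self (Iio_disjoint_Ici le_rfl))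
      measurableSet_Ici hint1 hint23,
    ← hsplit1,
    setIntegral_union (Disjoint.mono_left Ico_subset_Iio_self (Iio_disjoint_Ici le_rfl))
      measurableSet_Ici hint2 hint3]
  have e1 : ∫ t in Ioo (0:ℝ) m, Sf t = (1 - q) * m := by
    rw [setIntegral_congr_fun measurableSet_Ioo
      (fun t ht => by simp [hSdef, ht.2] : EqOn Sf (fun _ => (1 - q : ℝ)) _)]
    simp [Real.volume_Ioo, hm.le, mul_comm]
  have e3 : ∫ t in Ici D, Sf t = 0 := by
    rw [setIntegral_congr_fun measurableSet_Ici
      (fun t ht => by simp [hSdef, not_lt.2 (mem_Ici.1 ht), not_lt.2 (hmD.le.trans (mem_Ici.1 ht))] :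
        EqOn Sf (fun _ => (0:ℝ)) _)]
    simp
  have e2 : ∫ t in Ico m D, Sf t
      = m ^ b * (D ^ (1 - b) - m ^ (1 - b)) / (1 - b) - q * (D - m) := by
    rw [setIntegral_congr_fun measurableSet_Ico
      (fun t ht => by simp [hSdef, not_lt.2 ht.1, ht.2] :
        EqOn Sf (fun t => (m / t) ^ b - q) _)]
    have hi1 : IntegrableOn (fun t : ℝ => (m / t) ^ b) (Ico m D) := by
      have : ContinuousOn (fun t : ℝ => (m / t) ^ b) (Icc m D) := by
        refine ContinuousOn.rpow_const ?_ (fun x hx => Or.inr hb.le)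
        exact continuousOn_const.div continuousOn_id
          (fun x hx => ne_of_gt (lt_of_lt_of_le hm hx.1))
      exact this.integrableOn_Icc.mono_set Ico_subset_Icc_self
    rw [integral_sub hi1 (integrableOn_const measure_Ico_lt_top.ne)]
    have hconst : ∫ _ in Ico m D, q = q * (D - m) := by
      simp [Real.volume_Ico, hmD.le, mul_comm]
    rw [hconst]
    congr 1
    -- ∫ t in Ico m D, (m/t)^b = m^b * (D^(1-b) - m^(1-b)) / (1-b)
    have hcg : EqOn (fun t : ℝ => (m / t) ^ b) (fun t : ℝ => m ^ b * t ^ (-b)) (Ico m D) := by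
      intro t ht
      have ht0 : 0 < t := hm.trans_le ht.1
      simp only
      rw [Real.div_rpow hm.le ht0.le, Real.rpow_neg ht0.le, div_eq_mul_inv]
    rw [setIntegral_congr_fun measurableSet_Ico hcg,
      MeasureTheory.integral_Ico_eq_integral_Ioo, integral_const_mul,
      ← MeasureTheory.integral_Ioc_eq_integral_Ioo,
      ← intervalIntegral.integral_of_le hmD.le]
    rw [integral_rpow (Or.inr ⟨(by intro h; exact hb1 (by linarith) : -b ≠ -1),
      (by rw [Set.uIcc_of_le hmD.le]; exact fun h => absurd h.1 (not_le.2 hm))⟩)]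
    rw [show -b + 1 = 1 - b by ring, mul_div_assoc]
  rw [e1, e2, e3]
  ring


end SpecRes

/-- final algebra lemma -/
lemma specres_final_algebra (tmin D β : ℝ) (htmin : 0 < tmin) (hD : tmin < D)
    (hβ : 0 < β) (hβ1 : β ≠ 1) :
    (1 - (tmin / D) ^ β) * tmin
        + (tmin ^ β * (D ^ (1 - β) - tmin ^ (1 - β)) / (1 - β) - (tmin / D) ^ β * (D - tmin))
      = (tmin * D * β * (tmin ^ (β - 1) - D ^ (β - 1)) / ((1 - β) * (D ^ β - tmin ^ β)))
          * (1 - (tmin / D) ^ β) := by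
  have hD0 : 0 < D := htmin.trans hD
  have hA : 0 < tmin ^ β := Real.rpow_pos_of_pos htmin β
  have hB : 0 < D ^ β := Real.rpow_pos_of_pos hD0 β
  have hAB : tmin ^ β < D ^ β := Real.rpow_lt_rpow htmin.le hD hβ
  have hq : (tmin / D) ^ β = tmin ^ β / D ^ β := Real.div_rpow htmin.le hD0.le β
  have h1 : tmin ^ (1 - β) = tmin / tmin ^ β := by
    rw [eq_div_iff hA.ne', ← Real.rpow_add htmin, show 1 - β + β = 1 by ring, Real.rpow_one]
  have h2 : D ^ (1 - β) = D / D ^ β := by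
    rw [eq_div_iff hB.ne', ← Real.rpow_add hD0, show 1 - β + β = 1 by ring, Real.rpow_one]
  have h3 : tmin ^ (β - 1) = tmin ^ β / tmin := by
    rw [eq_div_iff htmin.ne']
    calc tmin ^ (β - 1) * tmin = tmin ^ (β - 1) * tmin ^ (1:ℝ) := by rw [Real.rpow_one]
      _ = tmin ^ β := by rw [← Real.rpow_add htmin, show β - 1 + 1 = β by ring]
  have h4 : D ^ (β - 1) = D ^ β / D := by
    rw [eq_div_iff hD0.ne']
    calc D ^ (β - 1) * D = D ^ (β - 1) * D ^ (1:ℝ) := by rw [Real.rpow_one]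
      _ = D ^ β := by rw [← Real.rpow_add hD0, show β - 1 + 1 = β by ring]
  rw [hq, h1, h2, h3, h4]
  have hβ1' : (1:ℝ) - β ≠ 0 := sub_ne_zero.2 (Ne.symm hβ1)
  have hBA : D ^ β - tmin ^ β ≠ 0 := sub_ne_zero.2 hAB.ne'
  generalize tmin ^ β = A at *
  generalize D ^ β = B at *
  field_simp
  ring

open SpecRes in
/-- paper's Theorem 6, expected machine running time per task under
Speculative-Resume: the machine time `M` equals `T` if `T ≤ D`, and otherwise
`τ_est + r·(τ_kill − τ_est) + max(tmin, (1−φ)·min(X₁, ..., X_{r+1}))`; then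
`E[M] = E1·(1 − (tmin/D)^β) + (tmin/D)^β·(τ_est + r·(τ_kill − τ_est)
  + tmin·(1−φ)^{β(r+1)}/(β(r+1) − 1) + tmin)`. -/
theorem expected_time_speculative_resume
    {Ω : Type*} [MeasurableSpace Ω] (μ : Measure Ω) [IsProbabilityMeasure μ]
    (r : ℕ) (tmin β D τest τkill φ : ℝ)
    (htmin : 0 < tmin) (hβ : 0 < β) (hβ1 : β ≠ 1) (hD : tmin < D)
    (hτest : 0 ≤ τest) (hτ : τest ≤ τkill) (hφ0 : 0 ≤ φ) (hφ1 : φ < 1)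
    (hβr : 1 < β * (r + 1 : ℝ))
    (T : Ω → ℝ) (X : Fin (r + 1) → Ω → ℝ)
    (hindep : iIndepFun
      (Fin.cons T X : Fin (r + 2) → Ω → ℝ) μ)
    (hT : IsPareto μ T tmin β)
    (hX : ∀ k, IsPareto μ (X k) tmin β)
    (M : Ω → ℝ)
    (hM : ∀ ω, M ω = if T ω ≤ D then T ω
      else τest + (r : ℝ) * (τkill - τest) + max tmin ((1 - φ) * ⨅ k, X k ω)) :
    ∫ ω, M ω ∂μ
      = (tmin * D * β * (tmin ^ (β - 1) - D ^ (β - 1))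
            / ((1 - β) * (D ^ β - tmin ^ β))) * (1 - (tmin / D) ^ β)
        + (tmin / D) ^ β * (τest + (r : ℝ) * (τkill - τest)
            + tmin * (1 - φ) ^ (β * (r + 1 : ℝ)) / (β * (r + 1 : ℝ) - 1) + tmin) := by
  have hD0 : (0:ℝ) < D := htmin.trans hD
  have h1φ : (0:ℝ) < 1 - φ := by linarith
  set b : ℝ := β * (r + 1 : ℝ) with hbdef
  -- measurability of the whole family
  have hmeas : ∀ i, Measurable ((Fin.cons T X : Fin (r + 2) → Ω → ℝ) i) := by
    intro i
    refine Fin.cases ?_ ?_ i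
    · simpa using hT.1
    · intro k; simpa using (hX k).1
  -- the minimum Y
  set Y : Ω → ℝ := fun ω => ⨅ k, X k ω with hYdef
  have hYmeas : Measurable Y := measurable_iInf_real X (fun k => (hX k).1)
  -- survival of Y via independence
  have hYset : ∀ t : ℝ, {ω | t < Y ω}
      = ⋂ i ∈ Finset.univ.erase (0 : Fin (r + 2)), ((Fin.cons T X : Fin (r + 2) → Ω → ℝ) i) ⁻¹' (Ioi t) := by
    intro t
    ext ω
    simp only [mem_setOf_eq, Set.mem_iInter, mem_preimage, mem_Ioi, Finset.mem_erase,
      Finset.mem_univ, and_true]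
    rw [hYdef]
    simp only
    rw [lt_iInf_iff']
    constructor
    · intro h i hi
      obtain ⟨k, rfl⟩ := Fin.exists_succ_eq.2 hi
      simpa using h k
    · intro h k
      have := h k.succ (Fin.succ_ne_zero k)
      simpa using this
  have hYmeasure : ∀ t : ℝ, μ {ω | t < Y ω}
      = ∏ i ∈ Finset.univ.erase (0 : Fin (r + 2)), μ (((Fin.cons T X : Fin (r + 2) → Ω → ℝ) i) ⁻¹' (Ioi t)) := by
    intro t
    rw [hYset t]
    exact hindep.meas_biInter (fun i _ => ⟨Ioi t, measurableSet_Ioi, rfl⟩)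
  have hcard : (Finset.univ.erase (0 : Fin (r + 2))).card = r + 1 := by
    rw [Finset.card_erase_of_mem (Finset.mem_univ _)]
    simp
  have hXpre : ∀ (k : Fin (r+1)) (t : ℝ),
      (((Fin.cons T X : Fin (r + 2) → Ω → ℝ) k.succ) ⁻¹' (Ioi t)) = {ω | t < X k ω} := by
    intro k t; ext ω; simp
  have hYsurv1 : ∀ t : ℝ, t < tmin → μ {ω | t < Y ω} = 1 := by
    intro t ht
    rw [hYmeasure t]
    have h : ∀ i ∈ Finset.univ.erase (0 : Fin (r + 2)),
        μ (((Fin.cons T X : Fin (r + 2) → Ω → ℝ) i) ⁻¹' (Ioi t)) = 1 := by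
      intro i hi
      obtain ⟨k, rfl⟩ := Fin.exists_succ_eq.2 (Finset.mem_erase.1 hi).1
      rw [hXpre k t]
      exact (hX k).2.2 t ht
    rw [Finset.prod_congr rfl h, Finset.prod_const_one]
  have hYsurv2 : ∀ t : ℝ, tmin ≤ t → μ {ω | t < Y ω} = ENNReal.ofReal ((tmin / t) ^ b) := by
    intro t ht
    have ht0 : 0 < t := htmin.trans_le ht
    rw [hYmeasure t]
    have h : ∀ i ∈ Finset.univ.erase (0 : Fin (r + 2)),
        μ (((Fin.cons T X : Fin (r + 2) → Ω → ℝ) i) ⁻¹' (Ioi t)) = ENNReal.ofReal ((tmin / t) ^ β) := by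
      intro i hi
      obtain ⟨k, rfl⟩ := Fin.exists_succ_eq.2 (Finset.mem_erase.1 hi).1
      rw [hXpre k t]
      exact (hX k).2.1 t ht
    rw [Finset.prod_congr rfl h, Finset.prod_const, hcard,
      ← ENNReal.ofReal_pow (Real.rpow_nonneg (div_nonneg htmin.le ht0.le) β)]
    congr 1
    rw [← Real.rpow_natCast ((tmin / t) ^ β) (r + 1),
      ← Real.rpow_mul (div_nonneg htmin.le ht0.le)]
    congr 1
    push_cast
    ring
  -- the random variable Z
  set Z : Ω → ℝ := fun ω => max tmin ((1 - φ) * Y ω) with hZdef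
  have hZmeas : Measurable Z := measurable_const.max (hYmeas.const_mul _)
  have hZlb : ∀ ω, tmin ≤ Z ω := fun ω => le_max_left _ _
  have hZ1 : ∀ t : ℝ, t < tmin → μ {ω | t < Z ω} = 1 := by
    intro t ht
    have h : {ω | t < Z ω} = univ := eq_univ_of_forall fun ω => lt_of_lt_of_le ht (hZlb ω)
    rw [h, measure_univ]
  have hZ2 : ∀ t : ℝ, tmin ≤ t →
      μ {ω | t < Z ω} = ENNReal.ofReal ((tmin * (1 - φ) / t) ^ b) := by
    intro t ht
    have ht0 : 0 < t := htmin.trans_le ht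
    have hset : {ω | t < Z ω} = {ω | t / (1 - φ) < Y ω} := by
      ext ω
      simp only [hZdef, mem_setOf_eq, lt_max_iff, mul_comm (1 - φ)]
      rw [or_iff_right (not_lt.2 ht), ← div_lt_iff₀ h1φ]
    have htdiv : tmin ≤ t / (1 - φ) := by
      rw [le_div_iff₀ h1φ]
      nlinarith
    rw [hset, hYsurv2 _ htdiv, div_div_eq_mul_div]
  have hZnn : 0 ≤ᵐ[μ] Z := ae_of_all _ fun ω => le_trans htmin.le (hZlb ω)
  obtain ⟨hZint, hZval⟩ := expectation_pareto_like μ Z hZmeas hZnn tmin (tmin * (1 - φ)) b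
    htmin (by positivity) hβr hZ1 hZ2
  have hZsimp : ∫ ω, Z ω ∂μ = tmin + tmin * (1 - φ) ^ b / (b - 1) := by
    rw [hZval, Real.mul_rpow htmin.le h1φ.le,
      show tmin ^ b * (1 - φ) ^ b * tmin ^ (1 - b) = tmin ^ b * tmin ^ (1 - b) * (1 - φ) ^ b
        by ring,
      ← Real.rpow_add htmin, show b + (1 - b) = 1 by ring, Real.rpow_one]
  -- truncated part
  obtain ⟨hfint, hfval⟩ := expectation_pareto_trunc μ T tmin β D htmin hβ hD hT.1 hT.2.1
    hT.2.2 hβ1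
  -- independence of the indicator and c + Z
  set c : ℝ := τest + (r : ℝ) * (τkill - τest) with hcdef
  set I : Ω → ℝ := fun ω => if T ω ≤ D then 0 else 1 with hIdef2
  set W2 : Ω → ℝ := fun ω => c + Z ω with hW2def
  set S₁ : Finset (Fin (r + 2)) := {0} with hS₁def
  set S₂ : Finset (Fin (r + 2)) := Finset.univ.erase 0 with hS₂def
  have hdisj : Disjoint S₁ S₂ := by
    simp [hS₁def, hS₂def, Finset.disjoint_singleton_left]
  have hIF := hindep.indepFun_finset S₁ S₂ hdisj hmeas
  have h0mem : (0 : Fin (r + 2)) ∈ S₁ := by simp [hS₁def]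
  have hsmem : ∀ k : Fin (r + 1), (k.succ : Fin (r + 2)) ∈ S₂ := by
    intro k
    simp [hS₂def, Fin.succ_ne_zero]
  set φ₁ : ({x // x ∈ S₁} → ℝ) → ℝ := fun v => if v ⟨0, h0mem⟩ ≤ D then 0 else 1 with hφ₁def
  set φ₂ : ({x // x ∈ S₂} → ℝ) → ℝ :=
    fun v => c + max tmin ((1 - φ) * ⨅ k : Fin (r + 1), v ⟨k.succ, hsmem k⟩) with hφ₂def
  have mφ₁ : Measurable φ₁ :=
    Measurable.ite (measurableSet_le (measurable_pi_apply _) measurable_const)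
      measurable_const measurable_const
  have mφ₂ : Measurable φ₂ := by
    apply Measurable.const_add
    apply Measurable.max measurable_const
    apply Measurable.const_mul
    exact measurable_iInf_real (fun k (v : {x // x ∈ S₂} → ℝ) => v ⟨k.succ, hsmem k⟩)
      (fun k => measurable_pi_apply _)
  have hIZ : IndepFun I W2 μ := by
    have h := hIF.comp mφ₁ mφ₂
    have e1 : φ₁ ∘ (fun a (i : {x // x ∈ S₁}) => (Fin.cons T X : Fin (r + 2) → Ω → ℝ) i a) = I := by
      funext a
      simp [hφ₁def, hIdef2]
    have e2 : φ₂ ∘ (fun a (i : {x // x ∈ S₂}) => (Fin.cons T X : Fin (r + 2) → Ω → ℝ) i a) = W2 := by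
      funext a
      simp [hφ₂def, hW2def, hZdef, hYdef]
    rwa [e1, e2] at h
  -- integral of the indicator
  have hTmeas : Measurable T := hT.1
  have hsetD : MeasurableSet {ω | D < T ω} := measurableSet_lt measurable_const hTmeas
  have hIind : I = Set.indicator {ω | D < T ω} (fun _ => (1:ℝ)) := by
    funext ω
    by_cases h : T ω ≤ D
    · simp [hIdef2, h, Set.indicator, not_lt.2 h]
    · simp [hIdef2, h, Set.indicator, not_le.1 h]
  have hIint : Integrable I μ := by
    rw [hIind]
    exact (integrable_const (1:ℝ)).indicator hsetD
  have hq0 : (0:ℝ) ≤ (tmin / D) ^ β := Real.rpow_nonneg (div_nonneg htmin.le hD0.le) β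
  have hIval : ∫ ω, I ω ∂μ = (tmin / D) ^ β := by
    rw [hIind, integral_indicator_const _ hsetD, measureReal_def, hT.2.1 D hD.le,
      ENNReal.toReal_ofReal hq0, smul_eq_mul, mul_one]
  have hW2int : Integrable W2 μ := by
    rw [hW2def]
    exact (integrable_const c).add hZint
  have hW2val : ∫ ω, W2 ω ∂μ = c + ∫ ω, Z ω ∂μ := by
    rw [hW2def, integral_add (integrable_const c) hZint, integral_const, measureReal_def, measure_univ]
    simp
  have hIW2int : Integrable (fun ω => I ω * W2 ω) μ := hIZ.integrable_mul hIint hW2int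
  have hIW2val : ∫ ω, I ω * W2 ω ∂μ = (tmin / D) ^ β * (c + ∫ ω, Z ω ∂μ) := by
    have h := hIZ.integral_fun_mul_eq_mul_integral hIint.1 hW2int.1
    rw [← hIval, ← hW2val]
    exact h
  -- decompose M
  have hMdecomp : ∀ ω, M ω = (if T ω ≤ D then T ω else 0) + I ω * W2 ω := by
    intro ω
    rw [hM ω]
    by_cases h : T ω ≤ D
    · simp [hIdef2, h]
    · simp only [hIdef2, hW2def, hZdef, hYdef, hcdef, if_neg h]
      ring
  calc ∫ ω, M ω ∂μ
      = ∫ ω, ((if T ω ≤ D then T ω else 0) + I ω * W2 ω) ∂μ :=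
        integral_congr_ae (ae_of_all _ hMdecomp)
    _ = (∫ ω, (if T ω ≤ D then T ω else 0) ∂μ) + ∫ ω, I ω * W2 ω ∂μ :=
        integral_add hfint hIW2int
    _ = _ := by
        rw [hfval, hIW2val, hZsimp, ← specres_final_algebra tmin D β htmin hD hβ hβ1, hcdef]
        ring
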